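/- Let A = ι(a₁)⋯ι(a_r) and B = ι(b₁)⋯ι(b_s) be invertible blades in Cl(Q) such that the span of {a₁,…,a_r} is contained in the span of {b₁,…,b_s} (so that A·B = A ⌟ B). Then for every vector x ∈ M, P_B(P_A(ι x)) = P_A(ι x), where P_C(X) = (1/2)·(X - α(C)·X·C⁻¹). -/

import Mathlib

open CliffordAlgebra

/-- The inverse projection operator `P_A(X) = (1/2)·(X - α(A)·X·A⁻¹)` for invertible `A`. -/
noncomputable def invProj {K M : Type*} [Field K] [Invertible (2 : K)]
    [AddCommGroup M] [Module K M] {Q : QuadraticForm K M}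
    (A : CliffordAlgebra Q) [Invertible A] (X : CliffordAlgebra Q) : CliffordAlgebra Q :=
  ⅟(2 : K) • (X - involute A * X * ⅟A)

section Aux

variable {K M : Type*} [Field K] [AddCommGroup M] [Module K M] (Q : QuadraticForm K M)

/-- Reflection along a vector `a` (as a linear map): `x ↦ x - (Q a)⁻¹ • polar Q a x • a`. -/
noncomputable def reflLM (a : M) : Module.End K M :=
  LinearMap.id - (Q a)⁻¹ • ((QuadraticMap.polarBilin Q a).smulRight a)

lemma reflLM_apply (a x : M) :
    reflLM Q a x = x - ((Q a)⁻¹ * QuadraticMap.polar Q a x) • a := by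
  simp [reflLM, mul_smul]

/-- Composition of reflections along the vectors of a list. -/
noncomputable def reflList (l : List M) : Module.End K M :=
  (l.map (reflLM Q)).prod

lemma reflList_nil : reflList Q ([] : List M) = LinearMap.id := by
  simp only [reflList, List.map_nil, List.prod_nil]; rfl

lemma reflList_cons (a : M) (t : List M) :
    reflList Q (a :: t) = reflLM Q a * reflList Q t := by
  simp [reflList]

variable {Q}

lemma neg_ι_mul_ι {a : M} (ha : Q a ≠ 0) (m : M) :
    -(ι Q a * ι Q m) = ι Q (reflLM Q a m) * ι Q a := by
  have h := ι_mul_ι_add_swap (Q := Q) a m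
  rw [reflLM_apply, map_sub, sub_mul, map_smul, smul_mul_assoc, ι_sq_scalar]
  have h2 : ((Q a)⁻¹ * QuadraticMap.polar Q a m) • (algebraMap K (CliffordAlgebra Q) (Q a))
      = algebraMap K (CliffordAlgebra Q) (QuadraticMap.polar Q a m) := by
    rw [Algebra.smul_def, ← map_mul, mul_comm ((Q a)⁻¹) _, mul_assoc,
      inv_mul_cancel₀ ha, mul_one]
  rw [h2, ← h]
  abel

lemma involute_prod_mul_ι (l : List M) (hl : ∀ m ∈ l, Q m ≠ 0) (x : M) :
    involute ((l.map (ι Q)).prod) * ι Q x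
      = ι Q (reflList Q l x) * (l.map (ι Q)).prod := by
  induction l with
  | nil => simp [reflList]
  | cons a t ih =>
    have ha : Q a ≠ 0 := hl a (List.mem_cons_self)
    have iht := ih fun m hm => hl m (List.mem_cons_of_mem a hm)
    simp only [List.map_cons, List.prod_cons, map_mul, involute_ι, reflList_cons,
      Module.End.mul_apply]
    calc -ι Q a * involute ((t.map (ι Q)).prod) * ι Q x
        = -ι Q a * (involute ((t.map (ι Q)).prod) * ι Q x) := by
          rw [neg_mul, neg_mul, neg_mul, mul_assoc]
      _ = -(ι Q a * (ι Q (reflList Q t x) * (t.map (ι Q)).prod)) := by rw [iht, neg_mul]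
      _ = -(ι Q a * ι Q (reflList Q t x)) * (t.map (ι Q)).prod := by
          rw [neg_mul, mul_assoc]
      _ = ι Q (reflLM Q a (reflList Q t x)) * (ι Q a * (t.map (ι Q)).prod) := by
          rw [neg_ι_mul_ι ha, mul_assoc]

lemma sub_reflList_mem_span (l : List M) (x : M) :
    x - reflList Q l x ∈ Submodule.span K {m | m ∈ l} := by
  induction l with
  | nil => simp [reflList]
  | cons a t ih =>
    have key : x - reflList Q (a :: t) x
        = (x - reflList Q t x)
          + ((Q a)⁻¹ * QuadraticMap.polar Q a (reflList Q t x)) • a := by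
      rw [reflList_cons, Module.End.mul_apply, reflLM_apply]; abel
    rw [key]
    refine Submodule.add_mem _ (Submodule.span_mono ?_ ih) (Submodule.smul_mem _ _
      (Submodule.subset_span (by simp)))
    intro m hm; simp_all [List.mem_cons]

lemma reflList_fixed (l : List M) {y : M} (hy : ∀ m ∈ l, QuadraticMap.polar Q m y = 0) :
    reflList Q l y = y := by
  induction l with
  | nil => simp [reflList]
  | cons a t ih =>
    rw [reflList_cons, Module.End.mul_apply,
      ih fun m hm => hy m (List.mem_cons_of_mem a hm), reflLM_apply,
      hy a (List.mem_cons_self)]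
    simp

lemma reflList_of_mem {l : List M}
    (hp : l.Pairwise fun u v => QuadraticMap.polar Q u v = 0)
    (hQ : ∀ m ∈ l, Q m ≠ 0) {c : M} (hc : c ∈ l) :
    reflList Q l c = -c := by
  induction l with
  | nil => simp at hc
  | cons a t ih =>
    rw [List.pairwise_cons] at hp
    rw [reflList_cons, Module.End.mul_apply]
    rcases List.mem_cons.1 hc with rfl | hct
    · rw [reflList_fixed t fun m hm => by
        rw [QuadraticMap.polar_comm]; exact hp.1 m hm]
      rw [reflLM_apply, QuadraticMap.polar_self]
      have ha : Q c ≠ 0 := hQ c (List.mem_cons_self)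
      rw [two_nsmul, ← two_mul, ← mul_assoc, mul_right_comm, inv_mul_cancel₀ ha,
        one_mul, two_smul]
      abel
    · rw [ih hp.2 (fun m hm => hQ m (List.mem_cons_of_mem a hm)) hct, reflLM_apply,
        QuadraticMap.polar_neg_right, hp.1 c hct]
      simp

lemma reflList_eq_neg_of_mem_span {l : List M}
    (hp : l.Pairwise fun u v => QuadraticMap.polar Q u v = 0)
    (hQ : ∀ m ∈ l, Q m ≠ 0) {y : M}
    (hy : y ∈ Submodule.span K {m | m ∈ l}) :
    reflList Q l y = -y := by
  have hle : Submodule.span K {m | m ∈ l} ≤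
      LinearMap.ker (reflList Q l + LinearMap.id) := by
    rw [Submodule.span_le]
    intro c hc
    simp only [SetLike.mem_coe, LinearMap.mem_ker, LinearMap.add_apply, LinearMap.id_apply]
    rw [reflList_of_mem hp hQ hc]; abel
  have := hle hy
  simp only [LinearMap.mem_ker, LinearMap.add_apply, LinearMap.id_apply] at this
  exact eq_neg_of_add_eq_zero_left this

end Aux



section Main

variable {K M : Type*} [Field K] [Invertible (2 : K)] [AddCommGroup M] [Module K M]
  {Q : QuadraticForm K M}

lemma invProj_ι_eq (l : List M) (hl : ∀ m ∈ l, Q m ≠ 0)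
    (C : CliffordAlgebra Q) [Invertible C] (hC : C = (l.map (ι Q)).prod) (x : M) :
    invProj C (ι Q x) = ι Q (⅟(2 : K) • (x - reflList Q l x)) := by
  subst hC
  rw [invProj, involute_prod_mul_ι l hl, mul_assoc, mul_invOf_self, mul_one,
    map_smul, map_sub]

end Main

/-- If the span of the blade `A` is contained in that of the blade `B` (so `A·B = A ⌟ B`), then `P_B(P_A(x)) = P_A(x)` for every vector `x`. -/
theorem invProj_invProj_eq_right {K M : Type*} [Field K] [Invertible (2 : K)]
    [AddCommGroup M] [Module K M] {Q : QuadraticForm K M}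
    {r s : ℕ} (a : Fin r → M) (b : Fin s → M)
    (A B : CliffordAlgebra Q) [Invertible A] [Invertible B]
    (hA : A = (List.ofFn fun i => ι Q (a i)).prod)
    (hB : B = (List.ofFn fun j => ι Q (b j)).prod)
    (ha : ∀ i j, i ≠ j → QuadraticMap.polar Q (a i) (a j) = 0)
    (hb : ∀ i j, i ≠ j → QuadraticMap.polar Q (b i) (b j) = 0)
    (haQ : ∀ i, Q (a i) ≠ 0) (hbQ : ∀ j, Q (b j) ≠ 0)
    (hspan : Submodule.span K (Set.range a) ≤ Submodule.span K (Set.range b))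
    (x : M) :
    invProj B (invProj A (ι Q x)) = invProj A (ι Q x) := by
  have hA' : A = ((List.ofFn a).map (ι Q)).prod := by rw [hA, List.map_ofFn]; rfl
  have hB' : B = ((List.ofFn b).map (ι Q)).prod := by rw [hB, List.map_ofFn]; rfl
  have hla : ∀ m ∈ List.ofFn a, Q m ≠ 0 := by
    intro m hm
    obtain ⟨i, rfl⟩ := List.mem_ofFn.1 hm
    exact haQ i
  have hlb : ∀ m ∈ List.ofFn b, Q m ≠ 0 := by
    intro m hm
    obtain ⟨j, rfl⟩ := List.mem_ofFn.1 hm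
    exact hbQ j
  have hsa : {m | m ∈ List.ofFn a} = Set.range a := by
    ext m; simpa using List.mem_ofFn a m
  have hsb : {m | m ∈ List.ofFn b} = Set.range b := by
    ext m; simpa using List.mem_ofFn b m
  rw [invProj_ι_eq (List.ofFn a) hla A hA' x]
  set y : M := ⅟(2 : K) • (x - reflList Q (List.ofFn a) x) with hy
  have hymem : y ∈ Submodule.span K {m | m ∈ List.ofFn b} := by
    rw [hsb]
    refine hspan ?_
    rw [← hsa]
    exact Submodule.smul_mem _ _ (sub_reflList_mem_span (List.ofFn a) x)
  have hpair : (List.ofFn b).Pairwise fun u v => QuadraticMap.polar Q u v = 0 := by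
    rw [List.pairwise_ofFn]
    intro i j hij
    exact hb i j (ne_of_lt hij)
  have hFy : reflList Q (List.ofFn b) y = -y :=
    reflList_eq_neg_of_mem_span hpair hlb hymem
  rw [invProj_ι_eq (List.ofFn b) hlb B hB' y, hFy, sub_neg_eq_add, ← two_smul K y,
    smul_smul, invOf_mul_self, one_smul]
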